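/- Consider the Matoušek USO m₁ of the 3-cube whose dimension influence graph has non-loop edges (1,2) and (2,3) only (a path without the transitive edge). Then m₁, viewed as an orientation of the 3-cube, does not admit three vertex-disjoint directed paths from its unique source to its unique sink. -/

import Mathlib

open scoped symmDiff

/-- An orientation of the `3`-cube. -/
def IsOrientation (o : Finset (Fin 3) → Finset (Fin 3)) : Prop :=
  ∀ (v : Finset (Fin 3)) (d : Fin 3), d ∈ o v ↔ d ∉ o (v ∆ {d})

/-- A directed step along an outgoing edge of the cube orientation `o`. -/
def Step (o : Finset (Fin 3) → Finset (Fin 3)) (v w : Finset (Fin 3)) : Prop :=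
  ∃ d, d ∈ o v ∧ w = v ∆ {d}

/-- `s :: p` is a directed path from `s` to `t` in the orientation `o`. -/
def IsPathFrom (o : Finset (Fin 3) → Finset (Fin 3)) (s t : Finset (Fin 3))
    (p : List (Finset (Fin 3))) : Prop :=
  List.Chain (Step o) s p ∧ (s :: p).getLast (List.cons_ne_nil s p) = t

/-- Existence of three directed paths from `s` to `t`, pairwise vertex-disjoint
except at `s` and `t`. -/
def ThreeDisjointPaths (o : Finset (Fin 3) → Finset (Fin 3))
    (s t : Finset (Fin 3)) : Prop :=
  ∃ p₁ p₂ p₃ : List (Finset (Fin 3)),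
    IsPathFrom o s t p₁ ∧ IsPathFrom o s t p₂ ∧ IsPathFrom o s t p₃ ∧
    (∀ x, x ∈ s :: p₁ → x ∈ s :: p₂ → x = s ∨ x = t) ∧
    (∀ x, x ∈ s :: p₁ → x ∈ s :: p₃ → x = s ∨ x = t) ∧
    (∀ x, x ∈ s :: p₂ → x ∈ s :: p₃ → x = s ∨ x = t)

/-- The dimension influence graph with non-loop edges (1,2) and (2,3) only
(dimensions 1,2,3 are represented by 0,1,2 : Fin 3). -/
def E₁ (d d' : Fin 3) : Prop :=
  d = d' ∨ (d = 0 ∧ d' = 1) ∨ (d = 1 ∧ d' = 2)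

/-- The Matoušek USO `m₁` of the 3-cube with dimension influence graph a path
without its transitive edge admits no three vertex-disjoint directed paths
from its unique source to its unique sink. -/
theorem stmt10 (m : Finset (Fin 3) → Finset (Fin 3))
    (hor : IsOrientation m) (h0 : m ∅ = ∅)
    (hmat : ∀ (d d' : Fin 3) (v : Finset (Fin 3)),
      (Xor' (d' ∈ m v) (d' ∈ m (v ∆ {d})) ↔ E₁ d d')) :
    ∀ s t : Finset (Fin 3), m s = Finset.univ → m t = ∅ →
      ¬ ThreeDisjointPaths m s t := by
  -- From the Matoušek condition: outmap across a `d`-edge flips exactly on `E₁ d ·`.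
  have key : ∀ (d d' : Fin 3) (v : Finset (Fin 3)),
      d' ∈ m (v ∆ {d}) ↔ ¬(d' ∈ m v ↔ E₁ d d') := by
    intro d d' v; have := hmat d d' v; unfold Xor' Xor at this; tauto
  -- Compute the outmap on all 8 vertices.
  have m0 : m {0} = {0,1} := by
    ext d
    have h := key 0 d ∅
    rw [show (∅:Finset (Fin 3)) ∆ {0} = {0} by decide] at h
    rw [h, h0]; fin_cases d <;> simp [E₁]
  have m1 : m {1} = {1,2} := by
    ext d
    have h := key 1 d ∅
    rw [show (∅:Finset (Fin 3)) ∆ {1} = {1} by decide] at h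
    rw [h, h0]; fin_cases d <;> simp [E₁]
  have m2 : m {2} = {2} := by
    ext d
    have h := key 2 d ∅
    rw [show (∅:Finset (Fin 3)) ∆ {2} = {2} by decide] at h
    rw [h, h0]; fin_cases d <;> simp [E₁]
  have m01 : m {0,1} = {0,2} := by
    ext d
    have h := key 1 d {0}
    rw [show ({0}:Finset (Fin 3)) ∆ {1} = {0,1} by decide] at h
    rw [h, m0]; fin_cases d <;> simp [E₁]
  have m02 : m {0,2} = {0,1,2} := by
    ext d
    have h := key 2 d {0}
    rw [show ({0}:Finset (Fin 3)) ∆ {2} = {0,2} by decide] at h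
    rw [h, m0]; fin_cases d <;> simp [E₁]
  have m12 : m {1,2} = {1} := by
    ext d
    have h := key 2 d {1}
    rw [show ({1}:Finset (Fin 3)) ∆ {2} = {1,2} by decide] at h
    rw [h, m1]; fin_cases d <;> simp [E₁]
  have m012 : m {0,1,2} = {0} := by
    ext d
    have h := key 2 d {0,1}
    rw [show ({0,1}:Finset (Fin 3)) ∆ {2} = {0,1,2} by decide] at h
    rw [h, m01]; fin_cases d <;> simp [E₁]
  -- Every vertex of the cube is one of the 8 subsets.
  have huniv : ∀ v : Finset (Fin 3), v = ∅ ∨ v = {0} ∨ v = {1} ∨ v = {2} ∨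
      v = {0,1} ∨ v = {0,2} ∨ v = {1,2} ∨ v = {0,1,2} := by decide
  -- Successor facts.
  have succS : ∀ w, Step m {0,2} w → (w = {0} ∨ w = {2} ∨ w = {0,1,2}) := by
    rintro w ⟨d, hd, rfl⟩
    rw [m02] at hd
    fin_cases d <;> decide
  have succ012 : ∀ w, Step m {0,1,2} w → w = {1,2} := by
    rintro w ⟨d, hd, rfl⟩
    rw [m012] at hd
    fin_cases d <;> first | decide | simp at hd
  have succ12 : ∀ w, Step m {1,2} w → w = {2} := by
    rintro w ⟨d, hd, rfl⟩
    rw [m12] at hd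
    fin_cases d <;> first | decide | simp at hd
  -- Any directed path ending at ∅ starting at {0,1,2} or {1,2} passes through {2}.
  have tail2 : ∀ (p : List (Finset (Fin 3))) (v : Finset (Fin 3)),
      List.Chain (Step m) v p → (v :: p).getLast (List.cons_ne_nil v p) = ∅ →
      (v = {0,1,2} ∨ v = {1,2}) → ({2} : Finset (Fin 3)) ∈ v :: p := by
    intro p
    induction p with
    | nil =>
      intro v _ hl hv
      simp only [List.getLast_singleton] at hl
      rcases hv with rfl | rfl <;> simp at hl
    | cons w q ih =>
      intro v hc hl hv
      rw [List.Chain, List.isChain_cons_cons] at hc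
      obtain ⟨hstep, hchain⟩ := hc
      have hl' : (w :: q).getLast (List.cons_ne_nil w q) = ∅ := by
        rw [← hl]; exact (List.getLast_cons _).symm
      rcases hv with rfl | rfl
      · have hw := succ012 w hstep
        subst hw
        exact List.mem_cons_of_mem _ (ih _ hchain hl' (Or.inr rfl))
      · have hw := succ12 w hstep
        subst hw
        exact List.mem_cons_of_mem _ List.mem_cons_self
  intro s t hs ht hthree
  -- Identify the source and the sink.
  have hsv : s = {0,2} := by
    rcases huniv s with rfl|rfl|rfl|rfl|rfl|rfl|rfl|rfl <;>
      first
        | rfl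
        | (exfalso; revert hs;
           simp only [h0, m0, m1, m2, m01, m02, m12, m012]; decide)
  have htv : t = ∅ := by
    rcases huniv t with rfl|rfl|rfl|rfl|rfl|rfl|rfl|rfl <;>
      first
        | rfl
        | (exfalso; revert ht;
           simp only [h0, m0, m1, m2, m01, m02, m12, m012]; decide)
  subst hsv htv
  obtain ⟨p₁, p₂, p₃, h1, h2, h3, h12, h13, h23⟩ := hthree
  -- Each path is nonempty; extract its first vertex.
  have head : ∀ p : List (Finset (Fin 3)), IsPathFrom m {0,2} ∅ p →
      ∃ v q, p = v :: q ∧ Step m {0,2} v ∧ List.Chain (Step m) v q ∧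
        (v :: q).getLast (List.cons_ne_nil v q) = ∅ := by
    intro p hp
    obtain ⟨hc, hl⟩ := hp
    match p with
    | [] => simp only [List.getLast_singleton] at hl; exact absurd hl (by decide)
    | v :: q =>
      rw [List.Chain, List.isChain_cons_cons] at hc
      refine ⟨v, q, rfl, hc.1, hc.2, ?_⟩
      rw [← hl]; exact (List.getLast_cons _).symm
  obtain ⟨v₁, q₁, rfl, s1, c1, l1⟩ := head p₁ h1
  obtain ⟨v₂, q₂, rfl, s2, c2, l2⟩ := head p₂ h2
  obtain ⟨v₃, q₃, rfl, s3, c3, l3⟩ := head p₃ h3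
  -- First vertices are pairwise distinct.
  have ne1 : ∀ v, Step m {0,2} v → ¬(v = {0,2} ∨ v = ∅) := by
    intro v hv
    rcases succS v hv with rfl | rfl | rfl <;> decide
  have d12 : v₁ ≠ v₂ := by
    intro h
    exact ne1 v₁ s1 (h12 v₁ (by simp) (by simp [h]))
  have d13 : v₁ ≠ v₃ := by
    intro h
    exact ne1 v₁ s1 (h13 v₁ (by simp) (by simp [h]))
  have d23 : v₂ ≠ v₃ := by
    intro h
    exact ne1 v₂ s2 (h23 v₂ (by simp) (by simp [h]))
  -- Two paths both contain {2}.
  have core : ∀ (va vb : Finset (Fin 3)) (qa qb : List (Finset (Fin 3))),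
      va = {2} → vb = {0,1,2} →
      List.Chain (Step m) vb qb →
      (vb :: qb).getLast (List.cons_ne_nil vb qb) = ∅ →
      (∀ x, x ∈ ({0,2} : Finset (Fin 3)) :: va :: qa →
        x ∈ ({0,2} : Finset (Fin 3)) :: vb :: qb →
        x = {0,2} ∨ x = (∅ : Finset (Fin 3))) → False := by
    intro va vb qa qb hva hvb hc hl hdisj
    subst hva hvb
    have hb : ({2} : Finset (Fin 3)) ∈ ({0,1,2} : Finset (Fin 3)) :: qb :=
      tail2 qb _ hc hl (Or.inl rfl)
    have := hdisj {2} (by simp) (List.mem_cons_of_mem _ hb)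
    revert this; decide
  rcases succS v₁ s1 with h₁ | h₁ | h₁ <;>
    rcases succS v₂ s2 with h₂ | h₂ | h₂ <;>
      rcases succS v₃ s3 with h₃ | h₃ | h₃ <;>
        first
        | (exact absurd (h₁.trans h₂.symm) d12)
        | (exact absurd (h₁.trans h₃.symm) d13)
        | (exact absurd (h₂.trans h₃.symm) d23)
        | (exact core v₁ v₂ q₁ q₂ h₁ h₂ c2 l2 h12)
        | (exact core v₁ v₃ q₁ q₃ h₁ h₃ c3 l3 h13)
        | (exact core v₂ v₃ q₂ q₃ h₂ h₃ c3 l3 h23)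
        | (exact core v₂ v₁ q₂ q₁ h₂ h₁ c1 l1 (fun x ha hb => h12 x hb ha))
        | (exact core v₃ v₁ q₃ q₁ h₃ h₁ c1 l1 (fun x ha hb => h13 x hb ha))
        | (exact core v₃ v₂ q₃ q₂ h₃ h₂ c2 l2 (fun x ha hb => h23 x hb ha))
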